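/- For every δ ∈ A and μ ∈ F, the set (H_m \ R_δ) ∪ (R_δ + μ·e^{(δ)}) is a 1-perfect code of length n. -/

import Mathlib

variable {F : Type*} [Field F] [Fintype F] [DecidableEq F] {m : ℕ}

def IsProj (α : Fin m → F) : Prop :=
  ∃ i, α i = 1 ∧ ∀ j < i, α j = 0

instance : DecidablePred (IsProj (F := F) (m := m)) :=
  fun α => decidable_of_iff (∃ i, α i = 1 ∧ ∀ j < i, α j = 0) Iff.rfl

/-- The projective points: nonzero vectors with first nonzero coordinate 1. -/
abbrev PA (F : Type*) [Field F] [Fintype F] [DecidableEq F] (m : ℕ) : Type _ :=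
  {α : Fin m → F // IsProj α}

/-- The Hamming code of length (q^m-1)/(q-1). -/
def Hcode (F : Type*) [Field F] [Fintype F] [DecidableEq F] (m : ℕ) : Set (PA F m → F) :=
  {c | ∑ α : PA F m, c α • (α : Fin m → F) = 0}

/-- Zero-extension of a vector of F^m to a word indexed by PA F m. -/
def bar (α : Fin m → F) : PA F m → F :=
  fun β => ∑ i, if (β : Fin m → F) = Pi.single i 1 then α i else 0

/-- The linear δ-component: span of the weight-3 codewords with value 1 at δ. -/
def Rcomp (δ : PA F m) : Submodule F (PA F m → F) :=
  Submodule.span F {c | c ∈ Hcode F m ∧ hammingNorm c = 3 ∧ c δ = 1}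

/-- A 1-perfect code: radius-1 balls around codewords partition the space. -/
def IsPerfect {ι : Type*} [Fintype ι] (P : Set (ι → F)) : Prop :=
  ∀ z : ι → F, ∃! c, c ∈ P ∧ hammingDist z c ≤ 1

/-- A 1-code: radius-1 balls around codewords are pairwise disjoint. -/
def IsOneCode {ι : Type*} [Fintype ι] (C : Set (ι → F)) : Prop :=
  ∀ x ∈ C, ∀ y ∈ C, x ≠ y → ∀ z, ¬(hammingDist x z ≤ 1 ∧ hammingDist y z ≤ 1)

/-- The radius-1 neighborhood of a set of words. -/
def nbhd {ι : Type*} [Fintype ι] (M : Set (ι → F)) : Set (ι → F) :=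
  {y | ∃ x ∈ M, hammingDist x y ≤ 1}

/-- The projective point corresponding to the standard basis vector π^(i). -/
def singleProj (i : Fin m) : PA F m :=
  ⟨Pi.single i 1, i, by simp, fun j hj => Pi.single_eq_of_ne (Fin.ne_of_lt hj) 1⟩

/-- The projective point (1, x). -/
def consProj {s : ℕ} (x : Fin s → F) : PA F (s+1) :=
  ⟨Fin.cons 1 x, 0, by simp, fun j hj => absurd hj (by simp)⟩

-- auxiliary development

lemma hammingDist_eq_hammingNorm' {ι : Type*} [Fintype ι] {G : Type*} [AddGroup G] [DecidableEq G] (x y : ι → G) :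
    hammingDist x y = hammingNorm (x - y) := by
  simp_rw [hammingNorm, hammingDist, Pi.sub_apply, ne_eq, sub_eq_zero]

/-- The syndrome map. -/
def synMap : (PA F m → F) →ₗ[F] (Fin m → F) where
  toFun c := ∑ α : PA F m, c α • (α : Fin m → F)
  map_add' x y := by simp [add_smul, Finset.sum_add_distrib]
  map_smul' t x := by simp [smul_smul, Finset.smul_sum]

lemma mem_Hcode_iff {c : PA F m → F} : c ∈ Hcode F m ↔ synMap c = 0 := Iff.rfl

lemma synMap_single (α : PA F m) (t : F) :
    synMap (Pi.single α t) = t • (α : Fin m → F) := by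
  unfold synMap
  simp only [LinearMap.coe_mk, AddHom.coe_mk]
  rw [Finset.sum_eq_single α]
  · simp
  · intro b _ hb; simp [Pi.single_apply, hb]
  · simp

lemma proj_ne_zero (α : PA F m) : (α : Fin m → F) ≠ 0 := by
  obtain ⟨i, hi, -⟩ := α.2
  intro h
  have := congrFun h i
  rw [hi] at this
  simp at this

lemma proj_eq_of_smul {α β : PA F m} {t : F} (h : (α : Fin m → F) = t • (β : Fin m → F)) :
    α = β := by
  obtain ⟨i, hi1, hi0⟩ := α.2
  obtain ⟨j, hj1, hj0⟩ := β.2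
  have hij : i = j := by
    rcases lt_trichotomy i j with hlt | heq | hgt
    · exfalso
      have := congrFun h i
      simp only [Pi.smul_apply, smul_eq_mul] at this
      rw [hi1, hj0 i hlt, mul_zero] at this
      simp at this
    · exact heq
    · exfalso
      have ht : t = 0 := by
        have := congrFun h j
        simp only [Pi.smul_apply, smul_eq_mul] at this
        rw [hi0 j hgt, hj1, mul_one] at this
        exact this.symm
      have := congrFun h i
      simp only [Pi.smul_apply, smul_eq_mul] at this
      rw [hi1, ht, zero_mul] at this
      simp at this
  subst hij
  have ht1 : t = 1 := by
    have := congrFun h i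
    simp only [Pi.smul_apply, smul_eq_mul] at this
    rw [hi1, hj1, mul_one] at this
    exact this.symm
  apply Subtype.ext
  rw [h, ht1, one_smul]

lemma exists_proj_smul {v : Fin m → F} (hv : v ≠ 0) :
    ∃ (β : PA F m) (t : F), t ≠ 0 ∧ v = t • (β : Fin m → F) := by
  have hS : (Finset.univ.filter (fun i => v i ≠ 0)).Nonempty := by
    rw [Finset.filter_nonempty_iff]
    obtain ⟨i, hi⟩ := Function.ne_iff.mp hv
    exact ⟨i, Finset.mem_univ i, hi⟩
  set S := Finset.univ.filter (fun i => v i ≠ 0) with hSdef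
  set i := S.min' hS with hidef
  have hvi : v i ≠ 0 := by
    have : i ∈ S := S.min'_mem hS
    rw [hSdef] at this
    simpa using this
  refine ⟨⟨(v i)⁻¹ • v, i, by simp [inv_mul_cancel₀ hvi], ?_⟩, v i, hvi, ?_⟩
  · intro j hj
    have hjz : v j = 0 := by
      by_contra hjne
      have hmem : j ∈ S := by rw [hSdef]; simpa using hjne
      exact absurd (lt_of_lt_of_le hj (S.min'_le j hmem)) (lt_irrefl _)
    simp [hjz]
  · funext j
    simp only [Pi.smul_apply, smul_eq_mul]
    rw [← mul_assoc, mul_inv_cancel₀ hvi, one_mul]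

lemma Hcode_norm_ge {c : PA F m → F} (hc : c ∈ Hcode F m) (h0 : c ≠ 0) :
    3 ≤ hammingNorm c := by
  by_contra hlt
  push_neg at hlt
  set S := Finset.univ.filter (fun α => c α ≠ 0) with hSdef
  have hnorm : hammingNorm c = S.card := rfl
  have hsum : ∑ α ∈ S, c α • (α : Fin m → F) = 0 := by
    rw [← hc]
    apply Finset.sum_subset (Finset.subset_univ S)
    intro x _ hx
    rw [hSdef] at hx
    simp only [Finset.mem_filter, Finset.mem_univ, true_and, not_not] at hx
    rw [hx, zero_smul]
  have hpos : 0 < S.card := by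
    rw [← hnorm]
    exact hammingNorm_pos_iff.mpr h0
  rw [hnorm] at hlt
  interval_cases h : S.card
  · obtain ⟨β, hβ⟩ := Finset.card_eq_one.mp h
    rw [hβ, Finset.sum_singleton] at hsum
    have hcβ : c β ≠ 0 := by
      have : β ∈ S := by rw [hβ]; exact Finset.mem_singleton_self β
      rw [hSdef] at this; simpa using this
    exact proj_ne_zero β (by
      have := congrArg (fun w => (c β)⁻¹ • w) hsum
      simpa [smul_smul, inv_mul_cancel₀ hcβ] using this)
  · obtain ⟨β, γ, hbg, hβγ⟩ := Finset.card_eq_two.mp h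
    have hcβ : c β ≠ 0 := by
      have : β ∈ S := by rw [hβγ]; simp
      rw [hSdef] at this; simpa using this
    have hcγ : c γ ≠ 0 := by
      have : γ ∈ S := by rw [hβγ]; simp
      rw [hSdef] at this; simpa using this
    rw [hβγ, Finset.sum_pair hbg] at hsum
    have : (β : Fin m → F) = (-(c β)⁻¹ * c γ) • (γ : Fin m → F) := by
      have h1 : c β • (β : Fin m → F) = -(c γ • (γ : Fin m → F)) := by
        rw [eq_neg_iff_add_eq_zero]; exact hsum
      have := congrArg (fun w => (c β)⁻¹ • w) h1
      simp only [smul_smul, inv_mul_cancel₀ hcβ, one_smul] at this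
      rw [this]
      funext j; simp; ring
    exact hbg (proj_eq_of_smul this)

lemma norm_neg' (w : PA F m → F) : hammingNorm (-w) = hammingNorm w := by
  simp [hammingNorm, Pi.neg_apply, neg_ne_zero]

lemma norm_smul_eq {a : F} (ha : a ≠ 0) (w : PA F m → F) :
    hammingNorm (a • w) = hammingNorm w := by
  apply le_antisymm hammingNorm_smul_le_hammingNorm
  have h : w = a⁻¹ • (a • w) := by rw [smul_smul, inv_mul_cancel₀ ha, one_smul]
  conv_lhs => rw [h]
  exact hammingNorm_smul_le_hammingNorm

lemma norm_single_le (β : PA F m) (t : F) : hammingNorm (Pi.single β t : PA F m → F) ≤ 1 := by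
  have hsub : Finset.univ.filter (fun x => (Pi.single β t : PA F m → F) x ≠ 0) ⊆ {β} := by
    intro x hx
    simp only [Finset.mem_filter, Finset.mem_univ, true_and] at hx
    by_contra hxb
    simp only [Finset.mem_singleton] at hxb
    rw [Pi.single_apply, if_neg hxb] at hx
    exact hx rfl
  have := Finset.card_le_card hsub
  simpa [hammingNorm] using this

lemma single_sub' (i : PA F m) (a b : F) :
    Pi.single i a - Pi.single i b = Pi.single (M := fun _ => F) i (a - b) := by
  funext x
  rcases eq_or_ne x i with rfl | hx
  · simp
  · simp [Pi.single_eq_of_ne hx]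

lemma single_neg' (i : PA F m) (a : F) :
    Pi.single i (-a) = -Pi.single (M := fun _ => F) i a := by
  funext x
  rcases eq_or_ne x i with rfl | hx
  · simp
  · simp [Pi.single_eq_of_ne hx]

lemma norm_three {δ β γ : PA F m} (h1 : δ ≠ β) (h2 : δ ≠ γ) (h3 : β ≠ γ)
    {a b t : F} (ha : a ≠ 0) (hb : b ≠ 0) (ht : t ≠ 0) :
    hammingNorm (Pi.single δ a + Pi.single β b - Pi.single γ t : PA F m → F) = 3 := by
  have hset : Finset.univ.filter
      (fun x => (Pi.single δ a + Pi.single β b - Pi.single γ t : PA F m → F) x ≠ 0) = {δ, β, γ} := by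
    ext x
    simp only [Finset.mem_filter, Finset.mem_univ, true_and, Finset.mem_insert,
      Finset.mem_singleton, Pi.add_apply, Pi.sub_apply, Pi.single_apply]
    constructor
    · intro hx
      by_contra hc
      push_neg at hc
      obtain ⟨hx1, hx2, hx3⟩ := hc
      simp [hx1, hx2, hx3] at hx
    · rintro (rfl | rfl | rfl)
      · simp_all
      · rw [if_neg (fun hc => h1 hc.symm)]; simp_all
      · rw [if_neg (fun hc => h2 hc.symm), if_neg (fun hc => h3 hc.symm)]; simp_all
  have : hammingNorm (Pi.single δ a + Pi.single β b - Pi.single γ t : PA F m → F)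
      = ({δ, β, γ} : Finset (PA F m)).card := by rw [← hset]; rfl
  rw [this]
  exact Finset.card_eq_three.mpr ⟨δ, β, γ, h1, h2, h3, rfl⟩

lemma exists_gen (δ β : PA F m) (hne : δ ≠ β) {a b : F} (ha : a ≠ 0) (hb : b ≠ 0) :
    ∃ (γ : PA F m) (t : F), t ≠ 0 ∧ γ ≠ δ ∧ γ ≠ β ∧
      Pi.single δ a + Pi.single β b - Pi.single γ t ∈ Rcomp δ := by
  have hv : a • (δ : Fin m → F) + b • (β : Fin m → F) ≠ 0 := by
    intro h
    apply hne
    apply proj_eq_of_smul (t := -(a⁻¹ * b))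
    funext j
    have hj := congrFun h j
    simp only [Pi.add_apply, Pi.smul_apply, smul_eq_mul, Pi.zero_apply] at hj
    simp only [Pi.smul_apply, smul_eq_mul]
    field_simp
    linear_combination hj
  obtain ⟨γ, t, ht, hvt⟩ := exists_proj_smul hv
  have hγδ : γ ≠ δ := by
    rintro rfl
    apply hne
    symm
    apply proj_eq_of_smul (t := b⁻¹ * (t - a))
    funext j
    have hj := congrFun hvt j
    simp only [Pi.add_apply, Pi.smul_apply, smul_eq_mul] at hj
    simp only [Pi.smul_apply, smul_eq_mul]
    field_simp
    linear_combination hj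
  have hγβ : γ ≠ β := by
    rintro rfl
    apply hne
    apply proj_eq_of_smul (t := a⁻¹ * (t - b))
    funext j
    have hj := congrFun hvt j
    simp only [Pi.add_apply, Pi.smul_apply, smul_eq_mul] at hj
    simp only [Pi.smul_apply, smul_eq_mul]
    field_simp
    linear_combination hj
  refine ⟨γ, t, ht, hγδ, hγβ, ?_⟩
  set h : PA F m → F := Pi.single δ a + Pi.single β b - Pi.single γ t with hh
  have hsyn : synMap h = 0 := by
    rw [hh, map_sub, map_add, synMap_single, synMap_single, synMap_single, hvt, sub_self]
  have hhδ : h δ = a := by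
    rw [hh]
    simp [Pi.single_eq_of_ne hne, Pi.single_eq_of_ne (Ne.symm hγδ)]
  have hg : a⁻¹ • h ∈ {c | c ∈ Hcode F m ∧ hammingNorm c = 3 ∧ c δ = 1} := by
    refine ⟨?_, ?_, ?_⟩
    · show synMap (a⁻¹ • h) = 0
      rw [map_smul, hsyn, smul_zero]
    · rw [norm_smul_eq (inv_ne_zero ha), hh]
      exact norm_three hne (Ne.symm hγδ) (Ne.symm hγβ) ha hb ht
    · simp [hhδ, inv_mul_cancel₀ ha]
  have heq : h = a • (a⁻¹ • h) := by rw [smul_smul, mul_inv_cancel₀ ha, one_smul]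
  rw [← hh] at *
  rw [heq]
  exact Submodule.smul_mem _ a (Submodule.subset_span hg)

lemma Rcomp_mem_Hcode {δ : PA F m} {x : PA F m → F} (hx : x ∈ Rcomp δ) :
    x ∈ Hcode F m := by
  have hle : Rcomp δ ≤ LinearMap.ker (synMap (F := F) (m := m)) := by
    rw [Rcomp, Submodule.span_le]
    intro c hc
    simp only [SetLike.mem_coe, LinearMap.mem_ker]
    exact mem_Hcode_iff.mp hc.1
  exact mem_Hcode_iff.mpr (LinearMap.mem_ker.mp (hle hx))

lemma norm_le_one_cases {w : PA F m → F} (h : hammingNorm w ≤ 1) :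
    w = 0 ∨ ∃ β, w β ≠ 0 ∧ w = Pi.single β (w β) := by
  by_cases h0 : w = 0
  · exact Or.inl h0
  right
  obtain ⟨β, hβ'⟩ := Function.ne_iff.mp h0
  have hβ : w β ≠ 0 := by simpa using hβ'
  refine ⟨β, hβ, ?_⟩
  funext x
  rcases eq_or_ne x β with rfl | hx
  · simp
  · rw [Pi.single_eq_of_ne hx]
    by_contra hxz
    have hsub : ({β, x} : Finset (PA F m)) ⊆ Finset.univ.filter (fun y => w y ≠ 0) := by
      intro y hy
      simp only [Finset.mem_insert, Finset.mem_singleton] at hy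
      simp only [Finset.mem_filter, Finset.mem_univ, true_and]
      rcases hy with rfl | rfl
      exacts [hβ, hxz]
    have hcard := Finset.card_le_card hsub
    rw [Finset.card_pair (Ne.symm hx)] at hcard
    have hn : hammingNorm w = (Finset.univ.filter (fun y => w y ≠ 0)).card := rfl
    omega

lemma norm_le_norm_sub_single_add_one (w : PA F m → F) (δ : PA F m) (t : F) :
    hammingNorm w ≤ hammingNorm (w - (Pi.single δ t : PA F m → F)) + 1 := by
  have h1 := hammingDist_triangle w (Pi.single δ t : PA F m → F) 0
  rw [hammingDist_zero_right, hammingDist_zero_right, hammingDist_eq_hammingNorm'] at h1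
  have h2 := norm_single_le δ t
  omega

lemma sep (δ : PA F m) (μ : F) {e : PA F m → F} (he : e ∈ Hcode F m)
    (heR : e ∉ Rcomp δ) : 3 ≤ hammingNorm (e - (Pi.single δ μ : PA F m → F)) := by
  have he0 : e ≠ 0 := fun h => heR (h ▸ (Rcomp δ).zero_mem)
  have h3 : 3 ≤ hammingNorm e := Hcode_norm_ge he he0
  by_contra hlt
  push_neg at hlt
  have hle : hammingNorm e ≤ 3 := by
    have := norm_le_norm_sub_single_add_one e δ μ; omega
  have heq3 : hammingNorm e = 3 := le_antisymm hle h3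
  have heδ : e δ ≠ 0 := by
    intro hz
    have hsub : Finset.univ.filter (fun x => e x ≠ 0) ⊆
        Finset.univ.filter (fun x => (e - (Pi.single δ μ : PA F m → F)) x ≠ 0) := by
      intro x hx
      simp only [Finset.mem_filter, Finset.mem_univ, true_and] at hx ⊢
      have hxδ : x ≠ δ := fun h => hx (h ▸ hz)
      rw [Pi.sub_apply, Pi.single_eq_of_ne hxδ, sub_zero]
      exact hx
    have hcard := Finset.card_le_card hsub
    have h1 : hammingNorm e = (Finset.univ.filter (fun x => e x ≠ 0)).card := rfl
    have h2 : hammingNorm (e - (Pi.single δ μ : PA F m → F)) =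
        (Finset.univ.filter (fun x => (e - (Pi.single δ μ : PA F m → F)) x ≠ 0)).card := rfl
    omega
  apply heR
  have hg : (e δ)⁻¹ • e ∈ {c | c ∈ Hcode F m ∧ hammingNorm c = 3 ∧ c δ = 1} := by
    refine ⟨?_, ?_, ?_⟩
    · show synMap ((e δ)⁻¹ • e) = 0
      rw [map_smul, mem_Hcode_iff.mp he, smul_zero]
    · rw [norm_smul_eq (inv_ne_zero heδ)]; exact heq3
    · simp [inv_mul_cancel₀ heδ]
  have heq : e = (e δ) • ((e δ)⁻¹ • e) := by
    rw [smul_smul, mul_inv_cancel₀ heδ, one_smul]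
  rw [heq]
  exact Submodule.smul_mem _ _ (Submodule.subset_span hg)

lemma Hcode_cover (z : PA F m → F) : ∃ c ∈ Hcode F m, hammingDist z c ≤ 1 := by
  by_cases hs : synMap z = 0
  · exact ⟨z, mem_Hcode_iff.mpr hs, by simp⟩
  obtain ⟨β, t, ht, hvt⟩ := exists_proj_smul hs
  refine ⟨z - (Pi.single β t : PA F m → F), ?_, ?_⟩
  · rw [mem_Hcode_iff, map_sub, synMap_single, ← hvt, sub_self]
  · rw [hammingDist_eq_hammingNorm', sub_sub_cancel]
    exact norm_single_le β t

lemma shift_cover (δ : PA F m) (μ : F) {z c : PA F m → F} (hc : c ∈ Rcomp δ)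
    (hd : hammingDist z c ≤ 1) :
    ∃ x ∈ Rcomp δ, hammingDist z (x + (Pi.single δ μ : PA F m → F)) ≤ 1 := by
  rw [hammingDist_eq_hammingNorm'] at hd
  rcases norm_le_one_cases hd with h0 | ⟨β, hβ, hw⟩
  · have hz : z = c := by rwa [sub_eq_zero] at h0
    refine ⟨c, hc, ?_⟩
    rw [hz, hammingDist_eq_hammingNorm']
    have h1 : c - (c + (Pi.single δ μ : PA F m → F)) = -(Pi.single δ μ : PA F m → F) := by
      abel
    rw [h1, norm_neg']
    exact norm_single_le δ μ
  · set lam : F := (z - c) β with hlam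
    by_cases hβδ : β = δ
    · subst hβδ
      refine ⟨c, hc, ?_⟩
      rw [hammingDist_eq_hammingNorm']
      have h1 : z - (c + (Pi.single β μ : PA F m → F)) =
          (Pi.single β (lam - μ) : PA F m → F) := by
        rw [sub_add_eq_sub_sub, hw, single_sub']
      rw [h1]
      exact norm_single_le _ _
    · by_cases hμ : μ = 0
      · subst hμ
        refine ⟨c, hc, ?_⟩
        rw [Pi.single_zero, add_zero, hammingDist_eq_hammingNorm']
        exact hd
      · obtain ⟨γ, t, ht, hγδ, hγβ, hmem⟩ :=
          exists_gen δ β (fun h => hβδ h.symm) (neg_ne_zero.mpr hμ) hβ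
        refine ⟨c + ((Pi.single δ (-μ) : PA F m → F) + Pi.single β lam - Pi.single γ t),
          Submodule.add_mem _ hc hmem, ?_⟩
        rw [hammingDist_eq_hammingNorm']
        have hz : z = c + (Pi.single β lam : PA F m → F) := by
          rw [← hw]; abel
        have h1 : z - (c + ((Pi.single δ (-μ) : PA F m → F) + Pi.single β lam
            - Pi.single γ t) + (Pi.single δ μ : PA F m → F)) =
            (Pi.single γ t : PA F m → F) := by
          conv_lhs => rw [hz]
          rw [single_neg']
          abel
        rw [h1]
        exact norm_single_le γ t

lemma P_dist (δ : PA F m) (μ : F) {x y : PA F m → F}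
    (hx : x ∈ (Hcode F m \ (Rcomp δ : Set (PA F m → F))) ∪
      ((· + Pi.single δ μ) '' (Rcomp δ : Set (PA F m → F))))
    (hy : y ∈ (Hcode F m \ (Rcomp δ : Set (PA F m → F))) ∪
      ((· + Pi.single δ μ) '' (Rcomp δ : Set (PA F m → F))))
    (hne : x ≠ y) : 3 ≤ hammingDist x y := by
  have hmix : ∀ u v : PA F m → F, u ∈ Hcode F m → u ∉ Rcomp δ → v ∈ Rcomp δ →
      3 ≤ hammingDist u (v + (Pi.single δ μ : PA F m → F)) := by
    intro u v huH huR hvR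
    rw [hammingDist_eq_hammingNorm', sub_add_eq_sub_sub]
    apply sep δ μ
    · rw [mem_Hcode_iff, map_sub, mem_Hcode_iff.mp huH,
        mem_Hcode_iff.mp (Rcomp_mem_Hcode hvR), sub_self]
    · intro hmem
      apply huR
      have huv : u = (u - v) + v := by abel
      rw [huv]
      exact Submodule.add_mem _ hmem hvR
  rcases hx with ⟨hxH, hxR⟩ | ⟨x', hx', rfl⟩
  · rcases hy with ⟨hyH, hyR⟩ | ⟨y', hy', rfl⟩
    · rw [hammingDist_eq_hammingNorm']
      apply Hcode_norm_ge
      · rw [mem_Hcode_iff, map_sub, mem_Hcode_iff.mp hxH, mem_Hcode_iff.mp hyH, sub_self]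
      · exact sub_ne_zero.mpr hne
    · exact hmix x y' hxH hxR hy'
  · rcases hy with ⟨hyH, hyR⟩ | ⟨y', hy', rfl⟩
    · rw [hammingDist_comm]
      exact hmix y x' hyH hyR hx'
    · have hne' : x' ≠ y' := fun h => hne (by rw [h])
      rw [hammingDist_eq_hammingNorm']
      have h1 : x' + (Pi.single δ μ : PA F m → F) - (y' + (Pi.single δ μ : PA F m → F))
          = x' - y' := by abel
      rw [h1]
      apply Hcode_norm_ge
      · rw [mem_Hcode_iff, map_sub, mem_Hcode_iff.mp (Rcomp_mem_Hcode hx'),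
          mem_Hcode_iff.mp (Rcomp_mem_Hcode hy'), sub_self]
      · exact sub_ne_zero.mpr hne'


set_option maxHeartbeats 800000 in
theorem stmt7 (δ : PA F m) (μ : F) :
    IsPerfect ((Hcode F m \ (Rcomp δ : Set (PA F m → F))) ∪
      ((· + Pi.single δ μ) '' (Rcomp δ : Set (PA F m → F)))) := by
  intro z
  have hex : ∃ c, c ∈ ((Hcode F m \ (Rcomp δ : Set (PA F m → F))) ∪
      ((· + Pi.single δ μ) '' (Rcomp δ : Set (PA F m → F)))) ∧ hammingDist z c ≤ 1 := by
    obtain ⟨c0, hc0H, hc0d⟩ := Hcode_cover z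
    by_cases hc0R : c0 ∈ Rcomp δ
    · obtain ⟨x, hxR, hxd⟩ := shift_cover δ μ hc0R hc0d
      refine ⟨x + Pi.single δ μ, Or.inr ⟨x, hxR, rfl⟩, ?_⟩
      exact hxd
    · exact ⟨c0, Or.inl ⟨hc0H, hc0R⟩, hc0d⟩
  obtain ⟨c, hcP, hcd⟩ := hex
  refine ⟨c, ⟨hcP, hcd⟩, ?_⟩
  rintro y ⟨hyP, hyd⟩
  by_contra hne
  have h3 := P_dist δ μ hyP hcP hne
  have htri := hammingDist_triangle y z c
  rw [hammingDist_comm y z] at htri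
  omega
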